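/- Let F be a finite field, n a natural number, f a function from F^n to F, and let p and q be multilinear polynomials in F[X_1,…,X_n]. Let D_p = {x ∈ F^n : f(x) ≠ p(x)} and D_q = {x ∈ F^n : f(x) ≠ q(x)}. If |D_p| + |D_q| + n·|F|^{n−1} < |F|^n, then p = q. (In particular, for δ-closeness with 2δ + n/|F| < 1, a function f can be δ-close to at most one multilinear polynomial.) -/

import Mathlib

/-- A multivariate polynomial is *multilinear* if its degree in each variable is at most 1. -/
def MvPolynomial.Multilinear {F : Type*} [CommSemiring F] {n : ℕ}
    (p : MvPolynomial (Fin n) F) : Prop :=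
  ∀ i : Fin n, p.degreeOf i ≤ 1

open MvPolynomial Finset in
/-- Counting fiberwise over the first coordinate. -/
private lemma card_filter_fin_succ {α : Type*} [Fintype α] [DecidableEq α] (n : ℕ)
    (Z : (Fin (n + 1) → α) → Prop) [DecidablePred Z] :
    (Finset.univ.filter Z).card
      = ∑ s : Fin n → α, (Finset.univ.filter (fun y => Z (Fin.cons y s))).card := by
  classical
  rw [Finset.card_eq_sum_card_fiberwise (f := Fin.tail) (t := Finset.univ)
    (fun x _ => Finset.mem_univ _)]
  refine Finset.sum_congr rfl fun s _ => ?_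
  refine Finset.card_nbij' (fun x => x 0) (fun y => Fin.cons y s) ?_ ?_ ?_ ?_
  · intro x hx
    simp only [Finset.mem_coe, Finset.mem_filter, Finset.mem_univ, true_and] at hx ⊢
    rw [← hx.2, Fin.cons_self_tail]
    exact hx.1
  · intro y hy
    simp only [Finset.mem_coe, Finset.mem_filter, Finset.mem_univ, true_and] at hy ⊢
    exact ⟨hy, by simp [Fin.tail_cons]⟩
  · intro x hx
    simp only [Finset.mem_coe, Finset.mem_filter, Finset.mem_univ, true_and] at hx
    rw [← hx.2]
    exact Fin.cons_self_tail x
  · intro y _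
    simp

open MvPolynomial Polynomial in
/-- A nonzero multilinear polynomial in `n` variables has at most `n·|F|^{n-1}` zeros. -/
private lemma multilinear_card_zeros_le (F : Type*) [Field F] [Fintype F] [DecidableEq F] :
    ∀ (n : ℕ) (r : MvPolynomial (Fin n) F), r.Multilinear → r ≠ 0 →
      (Finset.univ.filter (fun x : Fin n → F => MvPolynomial.eval x r = 0)).card
        ≤ n * Fintype.card F ^ (n - 1) := by
  intro n
  induction n with
  | zero =>
    intro r hr h0
    convert Nat.zero_le _
    rw [Finset.card_eq_zero, Finset.filter_eq_empty_iff]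
    intro x _
    rw [r.eq_C_of_isEmpty, MvPolynomial.eval_C]
    intro hc
    exact h0 (by rw [r.eq_C_of_isEmpty, hc, map_zero])
  | succ n ih =>
    intro r hr h0
    classical
    set P : Polynomial (MvPolynomial (Fin n) F) := finSuccEquiv F n r with hPdef
    have hPne : P ≠ 0 := by
      simp [hPdef, h0]
    have hPdeg : P.natDegree ≤ 1 := by
      rw [hPdef, natDegree_finSuccEquiv]; exact hr 0
    set a : MvPolynomial (Fin n) F := P.coeff 1 with ha
    set b : MvPolynomial (Fin n) F := P.coeff 0 with hb
    have hPeq : P = Polynomial.C a * Polynomial.X + Polynomial.C b :=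
      Polynomial.eq_X_add_C_of_natDegree_le_one hPdeg
    -- the evaluation formula on slices
    have hslice : ∀ (s : Fin n → F) (y : F),
        MvPolynomial.eval (Fin.cons y s) r = MvPolynomial.eval s a * y + MvPolynomial.eval s b := by
      intro s y
      rw [eval_eq_eval_mv_eval', ← hPdef, hPeq]
      simp
    -- multilinearity of coefficients
    have hcoefml : ∀ i : ℕ, (P.coeff i).Multilinear := by
      intro i j
      exact (degreeOf_coeff_finSuccEquiv r j i).trans (hr j.succ)
    -- a and b are not both zero
    have hab : a ≠ 0 ∨ b ≠ 0 := by
      by_contra hcon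
      push_neg at hcon
      apply hPne
      rw [hPeq, hcon.1, hcon.2]
      simp
    -- the "bad" set where both a and b vanish is small
    have hbad : (Finset.univ.filter
        (fun s : Fin n → F => MvPolynomial.eval s a = 0 ∧ MvPolynomial.eval s b = 0)).card
          ≤ n * Fintype.card F ^ (n - 1) := by
      rcases hab with hc | hc
      · refine le_trans (Finset.card_le_card ?_) (ih a (hcoefml 1) hc)
        intro s hs
        simp only [Finset.mem_filter, Finset.mem_univ, true_and] at hs ⊢
        exact hs.1
      · refine le_trans (Finset.card_le_card ?_) (ih b (hcoefml 0) hc)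
        intro s hs
        simp only [Finset.mem_filter, Finset.mem_univ, true_and] at hs ⊢
        exact hs.2
    -- slice-wise zero counts
    have hslicecard : ∀ s : Fin n → F,
        (Finset.univ.filter (fun y : F => MvPolynomial.eval (Fin.cons y s) r = 0)).card
          ≤ if MvPolynomial.eval s a = 0 ∧ MvPolynomial.eval s b = 0 then Fintype.card F
            else 1 := by
      intro s
      split_ifs with hcase
      · exact le_trans (Finset.card_filter_le _ _) (by simp)
      · -- the univariate polynomial is nonzero of degree ≤ 1
        set u : Polynomial F :=
          Polynomial.C (MvPolynomial.eval s a) * Polynomial.X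
            + Polynomial.C (MvPolynomial.eval s b) with hu
        have hune : u ≠ 0 := by
          intro h
          rcases eq_or_ne (MvPolynomial.eval s a) 0 with h1 | h1
          · apply hcase
            refine ⟨h1, ?_⟩
            have := congrArg (Polynomial.eval 0) h
            simpa [hu, h1] using this
          · apply h1
            have := congrArg (fun v => Polynomial.coeff v 1) h
            simpa [hu] using this
        have hudeg : u.natDegree ≤ 1 := by
          refine le_trans (Polynomial.natDegree_add_le _ _) ?_
          simp only [Polynomial.natDegree_C, max_le_iff]
          exact ⟨le_trans (Polynomial.natDegree_C_mul_le _ _) (by simp), Nat.zero_le 1⟩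
        refine le_trans (Polynomial.card_le_degree_of_subset_roots (p := u) ?_) hudeg
        intro y hy
        simp only [Finset.mem_val, Finset.mem_filter, Finset.mem_univ, true_and] at hy
        rw [Polynomial.mem_roots hune, Polynomial.IsRoot, hu]
        rw [hslice s y] at hy
        simpa using hy
    -- put it all together
    rw [card_filter_fin_succ]
    calc ∑ s : Fin n → F,
          (Finset.univ.filter (fun y : F => MvPolynomial.eval (Fin.cons y s) r = 0)).card
        ≤ ∑ s : Fin n → F,
            (if MvPolynomial.eval s a = 0 ∧ MvPolynomial.eval s b = 0 then Fintype.card F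
              else 1) := Finset.sum_le_sum fun s _ => hslicecard s
      _ = (Finset.univ.filter
            (fun s : Fin n → F => MvPolynomial.eval s a = 0 ∧ MvPolynomial.eval s b = 0)).card
              * Fintype.card F
          + (Finset.univ.filter
            (fun s : Fin n → F =>
              ¬(MvPolynomial.eval s a = 0 ∧ MvPolynomial.eval s b = 0))).card * 1 := by
          rw [Finset.sum_ite, Finset.sum_const, Finset.sum_const, smul_eq_mul, smul_eq_mul]
      _ ≤ (n * Fintype.card F ^ (n - 1)) * Fintype.card F + Fintype.card F ^ n := by
          refine Nat.add_le_add (Nat.mul_le_mul_right _ hbad) ?_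
          rw [mul_one]
          refine le_trans (Finset.card_filter_le _ _) ?_
          rw [Finset.card_univ, Fintype.card_fun, Fintype.card_fin]
      _ ≤ (n + 1) * Fintype.card F ^ (n + 1 - 1) := by
          rcases n with _ | m
          · simp
          · rw [Nat.succ_sub_one, Nat.succ_sub_one, mul_assoc, ← pow_succ]
            ring_nf
            omega

/-- **Uniqueness of close multilinear polynomials.**
If `f : F^n → F` differs from the multilinear polynomials `p` and `q` on sets `D_p`, `D_q` with
`|D_p| + |D_q| + n·|F|^{n−1} < |F|^n`, then `p = q`. -/
theorem multilinear_close_unique (F : Type*) [Field F] [Fintype F] (n : ℕ)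
    (f : (Fin n → F) → F) (p q : MvPolynomial (Fin n) F)
    (hp : p.Multilinear) (hq : q.Multilinear)
    (h : Nat.card {x : Fin n → F // f x ≠ MvPolynomial.eval x p}
        + Nat.card {x : Fin n → F // f x ≠ MvPolynomial.eval x q}
        + n * Fintype.card F ^ (n - 1) < Fintype.card F ^ n) :
    p = q := by
  classical
  by_contra hne
  have hr0 : p - q ≠ 0 := sub_ne_zero.mpr hne
  have hrml : (p - q).Multilinear := fun i =>
    le_trans (MvPolynomial.degreeOf_sub_le i p q) (max_le (hp i) (hq i))
  have hz := multilinear_card_zeros_le F n (p - q) hrml hr0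
  set A := Finset.univ.filter (fun x : Fin n → F => f x ≠ MvPolynomial.eval x p) with hA
  set B := Finset.univ.filter (fun x : Fin n → F => f x ≠ MvPolynomial.eval x q) with hB
  set Z := Finset.univ.filter (fun x : Fin n → F => MvPolynomial.eval x (p - q) = 0) with hZ
  have hcardA : Nat.card {x : Fin n → F // f x ≠ MvPolynomial.eval x p} = A.card := by
    rw [Nat.card_eq_fintype_card, Fintype.card_subtype]
  have hcardB : Nat.card {x : Fin n → F // f x ≠ MvPolynomial.eval x q} = B.card := by
    rw [Nat.card_eq_fintype_card, Fintype.card_subtype]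
  have hsplit : Z.card
      + (Finset.univ.filter (fun x : Fin n → F => ¬ MvPolynomial.eval x (p - q) = 0)).card
      = Fintype.card F ^ n := by
    rw [Finset.card_filter_add_card_filter_not, Finset.card_univ, Fintype.card_fun,
      Fintype.card_fin]
  have hNsub : (Finset.univ.filter (fun x : Fin n → F => ¬ MvPolynomial.eval x (p - q) = 0))
      ⊆ A ∪ B := by
    intro x hx
    simp only [Finset.mem_filter, Finset.mem_univ, true_and, map_sub, sub_eq_zero] at hx
    rw [Finset.mem_union, hA, hB]
    simp only [Finset.mem_filter, Finset.mem_univ, true_and]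
    by_contra hcon
    push_neg at hcon
    exact hx (hcon.1.symm.trans hcon.2)
  have hN : (Finset.univ.filter (fun x : Fin n → F => ¬ MvPolynomial.eval x (p - q) = 0)).card
      ≤ A.card + B.card :=
    le_trans (Finset.card_le_card hNsub) (Finset.card_union_le _ _)
  rw [hcardA, hcardB] at h
  omega
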